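/- Fix T > 0. Define X : [0,T] → ℝ by X(t) = ∫₀ᵗ (log(1 + τ²))² dτ and K : [0,T] → ℝ by K(t) = 4(1 − t⁴)/(1 + 6t² + t⁴)². Then for every triple (ℓ₀₁, ℓ₀₂, ℓ_φ) ∈ ℝ³ with ℓ₀₁ ≤ 0, ℓ₀₂ ≤ 0, ℓ_φ ≤ 0 and (ℓ₀₁, ℓ₀₂, ℓ_φ) ≠ (0,0,0), there exists a measurable, square-integrable σ : [0,T] → ℝ with σ(t) ≤ −1/2 for almost every t ∈ [0,T] such that 2ℓ_φ·∫₀ᵀ ( σ(t) + (1 + K(t)/2)·X(t)² − 4X(t) ) dt − 2(ℓ₀₁ + ℓ₀₂/(1 + T²))·X(T)² > 0. -/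

import Mathlib

open MeasureTheory Set

/-- `X(t) = ∫₀ᵗ (log(1 + τ²))² dτ`, the first component of the variation vector field in
Example 2.1. -/
noncomputable def exX (t : ℝ) : ℝ := ∫ τ in (0 : ℝ)..t, (Real.log (1 + τ ^ 2)) ^ 2

/-- `K(t) = 4(1 − t⁴)/(1 + 6t² + t⁴)²`, the sectional curvature along the trajectory in
Example 2.1. -/
noncomputable def exK (t : ℝ) : ℝ := 4 * (1 - t ^ 4) / (1 + 6 * t ^ 2 + t ^ 4) ^ 2

lemma contg : Continuous fun τ : ℝ => (Real.log (1 + τ ^ 2)) ^ 2 :=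
  (Continuous.log (by continuity) (fun x => by positivity)).pow 2

lemma contX : Continuous exX :=
  intervalIntegral.continuous_primitive (fun a b => contg.intervalIntegrable a b) 0

lemma contK : Continuous exK := by
  unfold exK
  exact Continuous.div (by continuity) (by continuity) (fun x => by positivity)

lemma XTpos (T : ℝ) (hT : 0 < T) : 0 < exX T := by
  apply intervalIntegral.intervalIntegral_pos_of_pos_on (contg.intervalIntegrable 0 T)
    (fun x hx => ?_) hT
  have h1 : (1:ℝ) < 1 + x ^ 2 := by nlinarith [hx.1]
  have := Real.log_pos h1
  positivity

/-- For every nonzero triple `(ℓ₀₁, ℓ₀₂, ℓ_φ)` of nonpositive reals there is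
a measurable, square-integrable `σ : [0,T] → ℝ` with `σ(t) ≤ −1/2` a.e. such that
`2ℓ_φ ∫₀ᵀ (σ(t) + (1 + K(t)/2) X(t)² − 4X(t)) dt − 2(ℓ₀₁ + ℓ₀₂/(1+T²)) X(T)² > 0`;
hence the second-order necessary condition fails for every Lagrangian multiplier and
`ū = (1,0)` is not a weak Pareto optimal control. -/
theorem second_order_condition_fails (T : ℝ) (hT : 0 < T)
    (l01 l02 lphi : ℝ) (h01 : l01 ≤ 0) (h02 : l02 ≤ 0) (hphi : lphi ≤ 0)
    (hne : (l01, l02, lphi) ≠ (0, 0, 0)) :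
    ∃ σ : ℝ → ℝ, Measurable σ ∧
      IntegrableOn (fun t => (σ t) ^ 2) (Icc (0 : ℝ) T) volume ∧
      (∀ᵐ t ∂(volume.restrict (Icc (0 : ℝ) T)), σ t ≤ -(1 / 2)) ∧
      0 < 2 * lphi * (∫ t in (0 : ℝ)..T, (σ t + (1 + exK t / 2) * (exX t) ^ 2 - 4 * exX t))
          - 2 * (l01 + l02 / (1 + T ^ 2)) * (exX T) ^ 2 := by
  have hT2 : (0:ℝ) < 1 + T ^ 2 := by positivity
  have hdiv : l02 / (1 + T ^ 2) ≤ 0 := div_nonpos_of_nonpos_of_nonneg h02 hT2.le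
  have hs : l01 + l02 / (1 + T ^ 2) ≤ 0 := by linarith
  have contf : Continuous fun t => (1 + exK t / 2) * (exX t) ^ 2 - 4 * exX t :=
    ((continuous_const.add (contK.div_const 2)).mul (contX.pow 2)).sub
      (continuous_const.mul contX)
  set I0 : ℝ := ∫ t in (0:ℝ)..T, ((1 + exK t / 2) * (exX t) ^ 2 - 4 * exX t) with hI0
  -- choose constant control c
  set c : ℝ := min (-(1/2)) ((-I0 - 1) / T) with hc
  refine ⟨fun _ => c, measurable_const, ?_, ?_, ?_⟩
  · exact integrableOn_const measure_Icc_lt_top.ne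
  · exact Filter.Eventually.of_forall (fun t => min_le_left _ _)
  · have hint : (∫ t in (0:ℝ)..T, (c + (1 + exK t / 2) * (exX t) ^ 2 - 4 * exX t)) = c * T + I0 := by
      have : (∫ t in (0:ℝ)..T, (c + ((1 + exK t / 2) * (exX t) ^ 2 - 4 * exX t)))
          = (∫ _ in (0:ℝ)..T, c) + I0 := by
        rw [hI0]
        exact intervalIntegral.integral_add (intervalIntegrable_const)
          (contf.intervalIntegrable 0 T)
      simp only [intervalIntegral.integral_const, smul_eq_mul] at this
      calc (∫ t in (0:ℝ)..T, (c + (1 + exK t / 2) * (exX t) ^ 2 - 4 * exX t))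
          = (∫ t in (0:ℝ)..T, (c + ((1 + exK t / 2) * (exX t) ^ 2 - 4 * exX t))) := by
            congr 1; ext t; ring
        _ = c * T + I0 := by rw [this]; ring
    rw [hint]
    have hXT := XTpos T hT
    rcases lt_or_eq_of_le hphi with hlt | heq
    · -- lphi < 0 : make c*T + I0 very negative
      have hcT : c * T + I0 ≤ -1 := by
        have h1 : c ≤ (-I0 - 1) / T := min_le_right _ _
        have h2 : c * T ≤ -I0 - 1 := by
          rw [le_div_iff₀ hT] at h1; linarith
        linarith
      have hA : 0 < lphi * (c * T + I0) := by nlinarith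
      have hB : 0 ≤ -(l01 + l02 / (1 + T ^ 2)) * (exX T) ^ 2 :=
        mul_nonneg (by linarith) (sq_nonneg _)
      nlinarith
    · -- lphi = 0 : then l01 + l02/(1+T²) < 0
      have hsum : l01 + l02 / (1 + T ^ 2) < 0 := by
        rcases lt_or_eq_of_le h01 with h | h
        · linarith
        · rcases lt_or_eq_of_le h02 with h2 | h2
          · have : l02 / (1 + T ^ 2) < 0 := div_neg_of_neg_of_pos h2 hT2
            linarith
          · exact absurd (by rw [h, h2, heq]) hne
      subst heq
      have hX2 : 0 < (exX T) ^ 2 := by positivity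
      nlinarith [mul_pos (neg_pos.2 hsum) hX2]
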